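/- Let M be a finitely generated Z^r-graded S-module with minimal free resolution F, let d ∈ Z^r, let G_i be the direct sum of all free summands of F_i whose generator has degree ≤ d + n componentwise, and let φ_i be the restriction of the i-th differential of F to G_i. Then: (i) φ_i(G_i) ⊆ G_{i−1} and φ_i ∘ φ_{i+1} = 0, so G = [G_0 ← G_1 ← G_2 ← ...] is a free complex; and (ii) up to isomorphism of complexes, G depends only on M and d, not on the chosen minimal free resolution. -/

import Mathlib

namespace VR

open MvPolynomial

variable (r : ℕ) (n : Fin r → ℕ) (k : Type) [Field k]

/-- Index set for the variables of the Cox ring of `ℙⁿ = ℙ^{n 0} × ⋯ × ℙ^{n (r-1)}`. -/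
abbrev Vars : Type := Σ i : Fin r, Fin (n i + 1)

/-- The Cox ring `S = k[x_{i,j}]`. -/
abbrev Cox : Type := MvPolynomial (Vars r n) k

/-- The multidegree of the variable `x_{i,j}` is the `i`-th standard basis vector of `ℤ^r`. -/
def wt : Vars r n → (Fin r → ℤ) := fun v => Pi.single v.1 1

/-- The degree-`d` graded piece of the Cox ring. -/
def Sdeg (d : Fin r → ℤ) : Set (Cox r n k) :=
  (weightedHomogeneousSubmodule k (wt r n) d : Set (Cox r n k))

/-- The ideal `⟨x_{i,0}, …, x_{i,n_i}⟩` of the `i`-th block of variables. -/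
noncomputable def coordIdeal (i : Fin r) : Ideal (Cox r n k) :=
  Ideal.span (Set.range fun j : Fin (n i + 1) => (X ⟨i, j⟩ : Cox r n k))

/-- The irrelevant ideal `B = ⋂ᵢ ⟨x_{i,0}, …, x_{i,n_i}⟩`. -/
noncomputable def irrel : Ideal (Cox r n k) := ⨅ i, coordIdeal r n k i

/-- The dimension `|n| = n 0 + ⋯ + n (r-1)` of `ℙⁿ`. -/
def totalDim : ℕ := ∑ i, n i

/-- The maximal homogeneous ideal `⟨all variables⟩` of the Cox ring. -/
noncomputable def maxIdeal : Ideal (Cox r n k) :=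
  Ideal.span (Set.range fun v : Vars r n => (X v : Cox r n k))

variable {N : Type} [AddCommGroup N] [Module (Cox r n k) N]

/-- An element is `B`-torsion if it is annihilated by a power of the irrelevant ideal. -/
def BTorsion (x : N) : Prop :=
  ∃ m : ℕ, ∀ s ∈ (irrel r n k) ^ m, s • x = 0

/-- A module is `B`-saturated when `H⁰_B(M) = 0`, i.e. it has no nonzero `B`-torsion. -/
def BSaturatedModule : Prop := ∀ x : N, BTorsion r n k x → x = 0

/-- `piece` is a `ℤʳ`-grading on the `S`-module `N`. -/
structure IsGrading (piece : (Fin r → ℤ) → Set N) : Prop where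
  zero_mem : ∀ d, (0 : N) ∈ piece d
  add_mem : ∀ d x y, x ∈ piece d → y ∈ piece d → x + y ∈ piece d
  neg_mem : ∀ d x, x ∈ piece d → -x ∈ piece d
  smul_mem : ∀ d e (s : Cox r n k) (x : N),
    s ∈ Sdeg r n k d → x ∈ piece e → s • x ∈ piece (d + e)
  decompose : ∀ x : N, ∃ f : (Fin r → ℤ) →₀ N,
    (∀ d, f d ∈ piece d) ∧ x = f.sum fun _ y => y
  indep : ∀ f : (Fin r → ℤ) →₀ N,
    (∀ d, f d ∈ piece d) → (f.sum fun _ y => y) = 0 → f = 0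

/-- The degree-`d` piece of the twisted free module `⊕_j S(-t j)`. -/
def fpiece {m : ℕ} (t : Fin m → (Fin r → ℤ)) (d : Fin r → ℤ) :
    Set (Fin m → Cox r n k) :=
  {x | ∀ j, x j ∈ Sdeg r n k (d - t j)}

/-- A complex `F₀ ← F₁ ← F₂ ← ⋯` of finite-rank twisted free graded `S`-modules,
with degree-preserving differentials. -/
structure FreeComplex where
  rank : ℕ → ℕ
  twist : ∀ i, Fin (rank i) → (Fin r → ℤ)
  diff : ∀ i, ((Fin (rank (i + 1)) → Cox r n k) →ₗ[Cox r n k] (Fin (rank i) → Cox r n k))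
  graded : ∀ i d x, x ∈ fpiece r n k (twist (i + 1)) d → diff i x ∈ fpiece r n k (twist i) d
  comp_zero : ∀ i, (diff i).comp (diff (i + 1)) = 0

/-- `F` has length at most `p`, i.e. `F_i = 0` for `i > p`. -/
def FreeComplex.LengthLE (F : FreeComplex r n k) (p : ℕ) : Prop :=
  ∀ i, p < i → F.rank i = 0

/-- All higher homology modules of `F` are supported on the irrelevant ideal. -/
def FreeComplex.HigherHomologyIrrelevant (F : FreeComplex r n k) : Prop :=
  ∀ (i : ℕ) (x : Fin (F.rank (i + 1)) → Cox r n k), F.diff i x = 0 →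
    ∃ m : ℕ, ∀ s ∈ (irrel r n k) ^ m, ∃ y, F.diff (i + 1) y = s • x

/-- The zeroth homology module `H₀(F) = F₀ / im(F₁ → F₀)`. -/
abbrev FreeComplex.H0 (F : FreeComplex r n k) : Type :=
  (Fin (F.rank 0) → Cox r n k) ⧸ LinearMap.range (F.diff 0)

/-- The induced grading on `H₀(F)`. -/
def FreeComplex.H0piece (F : FreeComplex r n k) (d : Fin r → ℤ) : Set F.H0 :=
  (LinearMap.range (F.diff 0)).mkQ '' (fpiece r n k (F.twist 0) d)

/-- The truncation `N_{≥ a}`: the submodule generated by all pieces of degree `≥ a`. -/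
noncomputable def trunc (piece : (Fin r → ℤ) → Set N) (a : Fin r → ℤ) : Submodule (Cox r n k) N :=
  Submodule.span (Cox r n k) (⋃ d ∈ {d : Fin r → ℤ | a ≤ d}, piece d)

/-- Two graded modules give isomorphic sheaves on `ℙⁿ`: sufficiently positive
truncations are isomorphic as graded modules. -/
def SheafEquiv {N₁ N₂ : Type} [AddCommGroup N₁] [Module (Cox r n k) N₁]
    [AddCommGroup N₂] [Module (Cox r n k) N₂]
    (P₁ : (Fin r → ℤ) → Set N₁) (P₂ : (Fin r → ℤ) → Set N₂) : Prop :=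
  ∃ a : Fin r → ℤ, ∃ e : trunc r n k P₁ a ≃ₗ[Cox r n k] trunc r n k P₂ a,
    ∀ d, a ≤ d → ∀ x : trunc r n k P₁ a, (x : N₁) ∈ P₁ d → ((e x : N₂) ∈ P₂ d)

/-- `F` is a virtual resolution of the graded module `(N, piece)`:  the associated
complex of sheaves on `ℙⁿ` is a locally free resolution of the sheaf of `N`. -/
def IsVirtualResolution (F : FreeComplex r n k) (piece : (Fin r → ℤ) → Set N) : Prop :=
  F.HigherHomologyIrrelevant ∧ SheafEquiv r n k (F.H0piece) piece


variable {N₀ : Type} [AddCommGroup N₀] [Module (Cox r n k) N₀]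

/-- `F`, together with the augmentation `ε : F₀ → N`, is a free resolution of the
graded module `(N, piece)`. -/
structure IsFreeResolution (F : FreeComplex r n k) (piece : (Fin r → ℤ) → Set N₀)
    (ε : (Fin (F.rank 0) → Cox r n k) →ₗ[Cox r n k] N₀) : Prop where
  surj : Function.Surjective ε
  gradedAug : ∀ d x, x ∈ fpiece r n k (F.twist 0) d → ε x ∈ piece d
  exact_zero : LinearMap.ker ε = LinearMap.range (F.diff 0)
  exact : ∀ i, LinearMap.ker (F.diff i) = LinearMap.range (F.diff (i + 1))

/-- A complex of free modules is minimal when all entries of its differentials lie in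
the maximal homogeneous ideal. -/
def FreeComplex.IsMinimal (F : FreeComplex r n k) : Prop :=
  ∀ i b j, F.diff i (Pi.single b 1) j ∈ maxIdeal r n k

/-- The grading of a quotient ring `S/I`, viewed as an `S`-module. -/
def qpiece (I : Ideal (Cox r n k)) (d : Fin r → ℤ) : Set (Cox r n k ⧸ I) :=
  I.mkQ '' (Sdeg r n k d)

/-- An ideal of the Cox ring is homogeneous if it is generated by its
homogeneous elements. -/
def IsHomogeneousIdeal (I : Ideal (Cox r n k)) : Prop :=
  I = Ideal.span {f | f ∈ I ∧ ∃ d, f ∈ Sdeg r n k d}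

/-- An ideal is `B`-saturated when `(I : B^∞) = I`. -/
def BSaturatedIdeal (I : Ideal (Cox r n k)) : Prop :=
  ∀ f : Cox r n k, (∃ m : ℕ, ∀ s ∈ (irrel r n k) ^ m, s * f ∈ I) → f ∈ I

/-- The height (codimension) of a prime ideal `Q`, as the height of the corresponding
point of the prime spectrum. -/
noncomputable def codim (Q : Ideal (Cox r n k)) (hQ : Q.IsPrime) : ℕ∞ :=
  Order.height (show PrimeSpectrum (Cox r n k) from ⟨Q, hQ⟩)

/-- `N` admits a regular sequence of length `t` contained in the maximal homogeneous
ideal (i.e. the depth of `N` is at least `t`). -/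
def HasDepthAtLeast (t : ℕ) : Prop :=
  ∃ rs : List (Cox r n k), rs.length = t ∧ (∀ x ∈ rs, x ∈ maxIdeal r n k) ∧
    RingTheory.Sequence.IsRegular N₀ rs

end VR
namespace VR

variable (r : ℕ) (n : Fin r → ℕ) (k : Type) [Field k]

/-- The subcomplex `G` of the free complex `F` spanned by all free summands whose
generator has degree `≤ d + n` componentwise: `G_i ⊆ F_i` consists of the vectors
supported on the coordinates with small twist. -/
noncomputable def Gsub (F : FreeComplex r n k) (d : Fin r → ℤ) (i : ℕ) :
    Submodule (Cox r n k) (Fin (F.rank i) → Cox r n k) where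
  carrier := {x | ∀ b, ¬ (F.twist i b ≤ d + fun t => (n t : ℤ)) → x b = 0}
  zero_mem' := fun _ _ => rfl
  add_mem' := by
    intro x y hx hy b hb
    simp only [Pi.add_apply, hx b hb, hy b hb, add_zero]
  smul_mem' := by
    intro c x hx b hb
    simp only [Pi.smul_apply, hx b hb, smul_zero]

end VR


set_option linter.dupNamespace false
namespace VR
open MvPolynomial

variable {r : ℕ} {n : Fin r → ℕ} {k : Type} [Field k]

lemma mem_Sdeg {p : Cox r n k} {w : Fin r → ℤ} :
    p ∈ Sdeg r n k w ↔ p.IsWeightedHomogeneous (wt r n) w := Iff.rfl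

lemma weight_nonneg (μ : Vars r n →₀ ℕ) : 0 ≤ Finsupp.weight (wt r n) μ := by
  rw [Finsupp.weight_apply]
  intro i
  rw [Finsupp.sum, Finset.sum_apply]
  refine Finset.sum_nonneg fun v _ => ?_
  simp only [Pi.smul_apply, wt, smul_eq_mul]
  rcases eq_or_ne v.1 i with h | h
  · rw [h, Pi.single_eq_same]; positivity
  · rw [Pi.single_eq_of_ne h.symm]; simp

lemma weight_eq_zero {μ : Vars r n →₀ ℕ} (h : Finsupp.weight (wt r n) μ = 0) : μ = 0 := by
  ext v
  by_contra hv
  have hvs : v ∈ μ.support := Finsupp.mem_support_iff.2 hv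
  have h1 : (Finsupp.weight (wt r n) μ) v.1 = 0 := by rw [h]; rfl
  rw [Finsupp.weight_apply, Finsupp.sum, Finset.sum_apply] at h1
  have hterm : ∀ u ∈ μ.support, (0:ℤ) ≤ (μ u • wt r n u) v.1 := by
    intro u _
    simp only [Pi.smul_apply, wt, smul_eq_mul]
    rcases eq_or_ne u.1 v.1 with h | h
    · rw [h, Pi.single_eq_same]; positivity
    · rw [Pi.single_eq_of_ne h.symm]; simp
  have := (Finset.sum_eq_zero_iff_of_nonneg hterm).1 h1 v hvs
  simp only [Pi.smul_apply, wt, Pi.single_eq_same] at this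
  have h2 : (μ v : ℤ) = 0 := by simpa using this
  exact hv (by exact_mod_cast h2)

lemma Sdeg_nonneg {p : Cox r n k} {w : Fin r → ℤ} (h : p ∈ Sdeg r n k w) (hp : p ≠ 0) :
    0 ≤ w := by
  obtain ⟨μ, hμ⟩ := MvPolynomial.ne_zero_iff.1 hp
  exact (mem_Sdeg.1 h hμ) ▸ weight_nonneg μ

lemma constantCoeff_eq_zero_of_mem_maxIdeal {p : Cox r n k} (h : p ∈ maxIdeal r n k) :
    constantCoeff p = 0 := by
  have : maxIdeal r n k ≤ RingHom.ker (constantCoeff (R := k) (σ := Vars r n)) := by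
    rw [maxIdeal, Ideal.span_le]
    rintro _ ⟨v, rfl⟩
    simp [RingHom.mem_ker]
  exact this h

lemma eq_zero_of_Sdeg_zero_mem_maxIdeal {p : Cox r n k}
    (h0 : p ∈ Sdeg r n k 0) (hm : p ∈ maxIdeal r n k) : p = 0 := by
  ext μ
  rcases eq_or_ne (coeff μ p) 0 with h | h
  · simp [h]
  · have : μ = 0 := weight_eq_zero (mem_Sdeg.1 h0 h)
    subst this
    have := constantCoeff_eq_zero_of_mem_maxIdeal hm
    rw [constantCoeff_eq] at this
    simp [this]


section B
variable {r : ℕ} {n : Fin r → ℕ} {k : Type} [Field k]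

/-- helper: `a • Pi.single b 1 = Pi.single b a` in a Pi ring. -/
lemma smul_single_one' {m : ℕ} (b : Fin m) (a : Cox r n k) :
    a • (Pi.single b 1 : Fin m → Cox r n k) = Pi.single b a := by
  funext j
  rcases eq_or_ne j b with h | h
  · subst h; simp
  · simp [Pi.single_eq_of_ne h]

lemma pi_eq_sum_smul_single {m : ℕ} (x : Fin m → Cox r n k) :
    x = ∑ b, x b • (Pi.single b 1 : Fin m → Cox r n k) := by
  conv_lhs => rw [← Finset.univ_sum_single x]
  exact Finset.sum_congr rfl fun b _ => (smul_single_one' b (x b)).symm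

lemma map_apply_eq_sum {m m' : ℕ}
    (g : (Fin m → Cox r n k) →ₗ[Cox r n k] (Fin m' → Cox r n k))
    (x : Fin m → Cox r n k) (j : Fin m') :
    g x j = ∑ b, x b * g (Pi.single b 1) j := by
  conv_lhs => rw [pi_eq_sum_smul_single x, map_sum]
  rw [Finset.sum_apply]
  exact Finset.sum_congr rfl fun b _ => by simp

lemma zero_mem_Sdeg (w : Fin r → ℤ) : (0 : Cox r n k) ∈ Sdeg r n k w :=
  (weightedHomogeneousSubmodule k (wt r n) w).zero_mem

lemma one_mem_Sdeg_zero : (1 : Cox r n k) ∈ Sdeg r n k 0 :=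
  MvPolynomial.isWeightedHomogeneous_one k (wt r n)

lemma mul_mem_Sdeg {p q : Cox r n k} {v w : Fin r → ℤ}
    (hp : p ∈ Sdeg r n k v) (hq : q ∈ Sdeg r n k w) : p * q ∈ Sdeg r n k (v + w) :=
  MvPolynomial.IsWeightedHomogeneous.mul hp hq

lemma single_one_mem_fpiece {m : ℕ} (t : Fin m → (Fin r → ℤ)) (b : Fin m) :
    (Pi.single b 1 : Fin m → Cox r n k) ∈ fpiece r n k t (t b) := by
  intro j
  rcases eq_or_ne j b with h | h
  · subst h; simpa [sub_self] using (one_mem_Sdeg_zero (r := r) (n := n) (k := k))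
  · rw [Pi.single_eq_of_ne h]; exact zero_mem_Sdeg _

/-- A degree preserving map between twisted free modules. -/
def GradedMap {m m' : ℕ} (t : Fin m → (Fin r → ℤ)) (t' : Fin m' → (Fin r → ℤ))
    (g : (Fin m → Cox r n k) →ₗ[Cox r n k] (Fin m' → Cox r n k)) : Prop :=
  ∀ w x, x ∈ fpiece r n k t w → g x ∈ fpiece r n k t' w

lemma GradedMap.entry {m m' : ℕ} {t : Fin m → (Fin r → ℤ)} {t' : Fin m' → (Fin r → ℤ)}
    {g : (Fin m → Cox r n k) →ₗ[Cox r n k] (Fin m' → Cox r n k)}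
    (hg : GradedMap t t' g) (b : Fin m) (j : Fin m') :
    g (Pi.single b 1) j ∈ Sdeg r n k (t b - t' j) :=
  hg (t b) _ (single_one_mem_fpiece t b) j

lemma GradedMap.comp {m₁ m₂ m₃ : ℕ} {t₁ : Fin m₁ → (Fin r → ℤ)} {t₂ : Fin m₂ → (Fin r → ℤ)}
    {t₃ : Fin m₃ → (Fin r → ℤ)}
    {g₁ : (Fin m₁ → Cox r n k) →ₗ[Cox r n k] (Fin m₂ → Cox r n k)}
    {g₂ : (Fin m₂ → Cox r n k) →ₗ[Cox r n k] (Fin m₃ → Cox r n k)}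
    (h₂ : GradedMap t₂ t₃ g₂) (h₁ : GradedMap t₁ t₂ g₁) :
    GradedMap t₁ t₃ (g₂ ∘ₗ g₁) :=
  fun w x hx => h₂ w _ (h₁ w x hx)

lemma GradedMap.id {m : ℕ} (t : Fin m → (Fin r → ℤ)) :
    GradedMap t t (LinearMap.id : (Fin m → Cox r n k) →ₗ[Cox r n k] _) := fun _ _ hx => hx

lemma GradedMap.sub {m m' : ℕ} {t : Fin m → (Fin r → ℤ)} {t' : Fin m' → (Fin r → ℤ)}
    {g h : (Fin m → Cox r n k) →ₗ[Cox r n k] (Fin m' → Cox r n k)}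
    (hg : GradedMap t t' g) (hh : GradedMap t t' h) : GradedMap t t' (g - h) := by
  intro w x hx j
  have := Submodule.sub_mem (weightedHomogeneousSubmodule k (wt r n) (w - t' j))
    (hg w x hx j) (hh w x hx j)
  simpa [mem_Sdeg] using this

/-- Linear map into a free module from prescribed images of the basis vectors. -/
noncomputable def mkMap {m m' : ℕ} (y : Fin m → (Fin m' → Cox r n k)) :
    (Fin m → Cox r n k) →ₗ[Cox r n k] (Fin m' → Cox r n k) :=
  (Pi.basisFun (Cox r n k) (Fin m)).constr (Cox r n k) y

@[simp] lemma mkMap_single {m m' : ℕ} (y : Fin m → (Fin m' → Cox r n k)) (b : Fin m) :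
    mkMap y (Pi.single b 1) = y b := by
  rw [mkMap, ← Pi.basisFun_apply]
  exact Module.Basis.constr_basis _ _ _ _

lemma linearMap_ext_single {m : ℕ} {M : Type*} [AddCommGroup M] [Module (Cox r n k) M]
    {g h : (Fin m → Cox r n k) →ₗ[Cox r n k] M}
    (H : ∀ b, g (Pi.single b 1) = h (Pi.single b 1)) : g = h := by
  apply Module.Basis.ext (Pi.basisFun (Cox r n k) (Fin m))
  intro b; rw [Pi.basisFun_apply]; exact H b

lemma mkMap_graded {m m' : ℕ} {t : Fin m → (Fin r → ℤ)} {t' : Fin m' → (Fin r → ℤ)}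
    {y : Fin m → (Fin m' → Cox r n k)} (hy : ∀ b, y b ∈ fpiece r n k t' (t b)) :
    GradedMap t t' (mkMap y) := by
  intro w x hx j
  rw [map_apply_eq_sum]
  apply Submodule.sum_mem (weightedHomogeneousSubmodule k (wt r n) (w - t' j))
  intro b _
  rw [mkMap_single]
  have := mul_mem_Sdeg (hx b) (hy b j)
  rwa [sub_add_sub_cancel] at this

end B

section C
variable {r : ℕ} {n : Fin r → ℕ} {k : Type} [Field k]

/-- Degree-`w` homogeneous component of a vector in a twisted free module. -/
noncomputable def pcomp {m : ℕ} (t : Fin m → (Fin r → ℤ)) (w : Fin r → ℤ)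
    (z : Fin m → Cox r n k) : Fin m → Cox r n k :=
  fun j => weightedHomogeneousComponent (wt r n) (w - t j) (z j)

lemma pcomp_mem {m : ℕ} (t : Fin m → (Fin r → ℤ)) (w : Fin r → ℤ)
    (z : Fin m → Cox r n k) : pcomp t w z ∈ fpiece r n k t w := fun j =>
  MvPolynomial.weightedHomogeneousComponent_mem (wt r n) (z j) (w - t j)

lemma pcomp_self {m : ℕ} {t : Fin m → (Fin r → ℤ)} {w : Fin r → ℤ}
    {z : Fin m → Cox r n k} (hz : z ∈ fpiece r n k t w) : pcomp t w z = z := by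
  funext j
  exact MvPolynomial.IsWeightedHomogeneous.weightedHomogeneousComponent_same (hz j)

lemma pcomp_ne {m : ℕ} {t : Fin m → (Fin r → ℤ)} {v w : Fin r → ℤ}
    {z : Fin m → Cox r n k} (hz : z ∈ fpiece r n k t v) (hvw : w ≠ v) : pcomp t w z = 0 := by
  funext j
  exact MvPolynomial.IsWeightedHomogeneous.weightedHomogeneousComponent_ne (w - t j) (hz j)
    (fun h => hvw (sub_left_inj.mp h))

/-- Finite set of candidate degrees of `z`. -/
noncomputable def Tset {m : ℕ} (t : Fin m → (Fin r → ℤ)) (z : Fin m → Cox r n k) :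
    Finset (Fin r → ℤ) :=
  Finset.univ.biUnion fun j => (z j).support.image fun μ => Finsupp.weight (wt r n) μ + t j

lemma pcomp_eq_zero_of_not_mem {m : ℕ} {t : Fin m → (Fin r → ℤ)} {z : Fin m → Cox r n k}
    {w : Fin r → ℤ} (hw : w ∉ Tset t z) : pcomp t w z = 0 := by
  funext j
  apply MvPolynomial.weightedHomogeneousComponent_eq_zero'
  intro μ hμ
  intro hcon
  apply hw
  refine Finset.mem_biUnion.2 ⟨j, Finset.mem_univ j, Finset.mem_image.2 ⟨μ, hμ, ?_⟩⟩
  rw [hcon]; abel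

lemma sum_pcomp {m : ℕ} (t : Fin m → (Fin r → ℤ)) (z : Fin m → Cox r n k) :
    ∑ w ∈ Tset t z, pcomp t w z = z := by
  funext j
  rw [Finset.sum_apply]
  classical
  apply MvPolynomial.ext
  intro μ
  rw [MvPolynomial.coeff_sum]
  simp only [pcomp, MvPolynomial.coeff_weightedHomogeneousComponent]
  have step : ∀ w ∈ Tset t z,
      (if Finsupp.weight (wt r n) μ = w - t j then MvPolynomial.coeff μ (z j) else 0)
      = (if Finsupp.weight (wt r n) μ + t j = w then MvPolynomial.coeff μ (z j) else 0) := by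
    intro w _
    congr 1
    simp only [eq_iff_iff]
    constructor
    · intro h; rw [h]; abel
    · intro h; rw [← h]; abel
  rw [Finset.sum_congr rfl step, Finset.sum_ite_eq (Tset t z)]
  by_cases hμ : MvPolynomial.coeff μ (z j) = 0
  · simp [hμ]
  · rw [if_pos]
    refine Finset.mem_biUnion.2 ⟨j, Finset.mem_univ j,
      Finset.mem_image.2 ⟨μ, MvPolynomial.mem_support_iff.2 hμ, rfl⟩⟩

/-- Graded maps commute with taking homogeneous components. -/
lemma pcomp_map {m m' : ℕ} {t : Fin m → (Fin r → ℤ)} {t' : Fin m' → (Fin r → ℤ)}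
    {ψ : (Fin m → Cox r n k) →ₗ[Cox r n k] (Fin m' → Cox r n k)}
    (hψ : GradedMap t t' ψ) (z : Fin m → Cox r n k) (w : Fin r → ℤ) :
    pcomp t' w (ψ z) = ψ (pcomp t w z) := by
  classical
  have hz : z = ∑ v ∈ insert w (Tset t z), pcomp t v z := by
    rw [Finset.sum_insert_of_eq_zero_if_notMem (s := Tset t z) (a := w) (fun h => pcomp_eq_zero_of_not_mem h)]
    exact (sum_pcomp t z).symm
  have hadd : ∀ (s : Finset (Fin r → ℤ)) (f : (Fin r → ℤ) → (Fin m' → Cox r n k)),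
      pcomp t' w (∑ v ∈ s, f v) = ∑ v ∈ s, pcomp t' w (f v) := by
    intro s f
    funext j
    simp only [pcomp, Finset.sum_apply, map_sum]
  conv_lhs => rw [hz, map_sum, hadd]
  rw [Finset.sum_eq_single_of_mem w (Finset.mem_insert_self w _)]
  · rw [pcomp_self (hψ w _ (pcomp_mem t w z))]
  · intro v _ hv
    exact pcomp_ne (hψ v _ (pcomp_mem t v z)) (Ne.symm hv)

/-- Existence of graded preimages through a graded map between free modules. -/
lemma exists_graded_preimage {m m' : ℕ} {t : Fin m → (Fin r → ℤ)} {t' : Fin m' → (Fin r → ℤ)}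
    {ψ : (Fin m → Cox r n k) →ₗ[Cox r n k] (Fin m' → Cox r n k)}
    (hψ : GradedMap t t' ψ) {x : Fin m' → Cox r n k} {w : Fin r → ℤ}
    (hx : x ∈ fpiece r n k t' w) (hr : x ∈ LinearMap.range ψ) :
    ∃ y ∈ fpiece r n k t w, ψ y = x := by
  obtain ⟨z, hz⟩ := hr
  refine ⟨pcomp t w z, pcomp_mem t w z, ?_⟩
  rw [← pcomp_map hψ, hz, pcomp_self hx]

end C

section D
variable {r : ℕ} {n : Fin r → ℕ} {k : Type} [Field k]
variable {N : Type} [AddCommGroup N] [Module (Cox r n k) N]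
variable {piece : (Fin r → ℤ) → Set N}

lemma sub_mem_piece (hgr : IsGrading r n k piece) {w : Fin r → ℤ} {a b : N}
    (ha : a ∈ piece w) (hb : b ∈ piece w) : a - b ∈ piece w := by
  rw [sub_eq_add_neg]
  exact hgr.add_mem w _ _ ha (hgr.neg_mem w b hb)

/-- Graded surjectivity of a graded surjection onto a graded module. -/
lemma exists_graded_preimage_aug (hgr : IsGrading r n k piece)
    {m : ℕ} {t : Fin m → (Fin r → ℤ)} {ε : (Fin m → Cox r n k) →ₗ[Cox r n k] N}
    (hsurj : Function.Surjective ε)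
    (haug : ∀ w x, x ∈ fpiece r n k t w → ε x ∈ piece w)
    {c : N} {w : Fin r → ℤ} (hc : c ∈ piece w) :
    ∃ y ∈ fpiece r n k t w, ε y = c := by
  classical
  obtain ⟨z, hz⟩ := hsurj c
  set T : Finset (Fin r → ℤ) := insert w (Tset t z) with hT
  set val : (Fin r → ℤ) → N :=
    fun v => ε (pcomp t v z) - (if v = w then c else 0) with hval
  have hval0 : ∀ v, val v ≠ 0 → v ∈ T := by
    intro v hv
    by_contra hvT
    apply hv
    have hvw : v ≠ w := fun h => hvT (h ▸ Finset.mem_insert_self w _)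
    have : pcomp t v z = 0 := pcomp_eq_zero_of_not_mem
      (fun h => hvT (Finset.mem_insert_of_mem h))
    simp [hval, this, hvw]
  set f : (Fin r → ℤ) →₀ N := Finsupp.onFinset T val hval0 with hf
  have hmem : ∀ v, f v ∈ piece v := by
    intro v
    have : f v = val v := rfl
    rw [this, hval]
    rcases eq_or_ne v w with h | h
    · subst h
      simp only [if_pos rfl]
      exact sub_mem_piece hgr (haug v _ (pcomp_mem t v z)) hc
    · simp only [if_neg h, sub_zero]
      exact haug v _ (pcomp_mem t v z)
  have hsum : (f.sum fun _ y => y) = 0 := by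
    rw [Finsupp.sum_of_support_subset f Finsupp.support_onFinset_subset _ (fun _ _ => rfl)]
    have : ∀ v ∈ T, (f v : N) = ε (pcomp t v z) - (if v = w then c else 0) := fun v _ => rfl
    rw [Finset.sum_congr rfl this, Finset.sum_sub_distrib]
    rw [Finset.sum_ite_eq' T w (fun _ => c), if_pos (Finset.mem_insert_self w _)]
    have hzsum : ∑ v ∈ T, pcomp t v z = z := by
      rw [hT, Finset.sum_insert_of_eq_zero_if_notMem (s := Tset t z) (a := w) (fun h => pcomp_eq_zero_of_not_mem h)]
      exact sum_pcomp t z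
    rw [← map_sum, hzsum, hz, sub_self]
  have hf0 := hgr.indep f hmem hsum
  have : ε (pcomp t w z) - c = 0 := by
    have h1 : f w = 0 := by rw [hf0]; rfl
    have h2 : f w = ε (pcomp t w z) - (if w = w then c else 0) := rfl
    rw [h1] at h2
    simpa using h2.symm
  exact ⟨pcomp t w z, pcomp_mem t w z, sub_eq_zero.mp this ⟩

end D

section E
variable {r : ℕ} {n : Fin r → ℕ} {k : Type} [Field k]
variable {N : Type} [AddCommGroup N] [Module (Cox r n k) N]
variable (F F' : FreeComplex r n k)

/-- Data for one stage of the chain-map construction. -/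
def ChainT (i : ℕ) : Type :=
  {p : ((Fin (F.rank i) → Cox r n k) →ₗ[Cox r n k] (Fin (F'.rank i) → Cox r n k)) ×
       ((Fin (F.rank (i+1)) → Cox r n k) →ₗ[Cox r n k] (Fin (F'.rank (i+1)) → Cox r n k)) //
    GradedMap (F.twist i) (F'.twist i) p.1 ∧
    GradedMap (F.twist (i+1)) (F'.twist (i+1)) p.2 ∧
    F'.diff i ∘ₗ p.2 = p.1 ∘ₗ F.diff i}

variable {F F'} {piece : (Fin r → ℤ) → Set N}

lemma exists_chain_map
    (ε : (Fin (F.rank 0) → Cox r n k) →ₗ[Cox r n k] N)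
    (ε' : (Fin (F'.rank 0) → Cox r n k) →ₗ[Cox r n k] N)
    (hgr : IsGrading r n k piece)
    (hF : IsFreeResolution r n k F piece ε) (hF' : IsFreeResolution r n k F' piece ε') :
    ∃ α : ∀ i, (Fin (F.rank i) → Cox r n k) →ₗ[Cox r n k] (Fin (F'.rank i) → Cox r n k),
      (∀ i, GradedMap (F.twist i) (F'.twist i) (α i)) ∧
      ε' ∘ₗ α 0 = ε ∧
      ∀ i, F'.diff i ∘ₗ α (i + 1) = α i ∘ₗ F.diff i := by
  classical
  -- the zeroth map
  have h0 : ∀ b : Fin (F.rank 0), ∃ y ∈ fpiece r n k (F'.twist 0) (F.twist 0 b),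
      ε' y = ε (Pi.single b 1) :=
    fun b => exists_graded_preimage_aug hgr hF'.surj hF'.gradedAug
      (hF.gradedAug _ _ (single_one_mem_fpiece (F.twist 0) b))
  choose y0 hy0g hy0e using h0
  set g0 := mkMap y0 with hg0def
  have hg0grad : GradedMap (F.twist 0) (F'.twist 0) g0 := mkMap_graded hy0g
  have hg0aug : ε' ∘ₗ g0 = ε := by
    apply linearMap_ext_single
    intro b
    simp only [LinearMap.comp_apply, hg0def, mkMap_single]
    exact hy0e b
  -- a general lifting step
  have lift : ∀ (i : ℕ)
      (g : (Fin (F.rank i) → Cox r n k) →ₗ[Cox r n k] (Fin (F'.rank i) → Cox r n k)),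
      GradedMap (F.twist i) (F'.twist i) g →
      (∀ b : Fin (F.rank (i+1)), g (F.diff i (Pi.single b 1)) ∈ LinearMap.range (F'.diff i)) →
      ∃ g' : (Fin (F.rank (i+1)) → Cox r n k) →ₗ[Cox r n k] (Fin (F'.rank (i+1)) → Cox r n k),
        GradedMap (F.twist (i+1)) (F'.twist (i+1)) g' ∧ F'.diff i ∘ₗ g' = g ∘ₗ F.diff i := by
    intro i g hg hrange
    have h : ∀ b : Fin (F.rank (i+1)), ∃ y ∈ fpiece r n k (F'.twist (i+1)) (F.twist (i+1) b),
        F'.diff i y = g (F.diff i (Pi.single b 1)) := by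
      intro b
      refine exists_graded_preimage (fun w x hx => F'.graded i w x hx) ?_ (hrange b)
      exact hg _ _ (F.graded i _ _ (single_one_mem_fpiece (F.twist (i+1)) b))
    choose y hyg hye using h
    refine ⟨mkMap y, mkMap_graded hyg, ?_⟩
    apply linearMap_ext_single
    intro b
    simp only [LinearMap.comp_apply, mkMap_single]
    exact hye b
  -- range condition at the base
  have hrng0 : ∀ b : Fin (F.rank 1),
      g0 (F.diff 0 (Pi.single b 1)) ∈ LinearMap.range (F'.diff 0) := by
    intro b
    rw [← hF'.exact_zero, LinearMap.mem_ker]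
    have h1 : ε' (g0 (F.diff 0 (Pi.single b 1))) = ε (F.diff 0 (Pi.single b 1)) := by
      rw [← hg0aug]; rfl
    rw [h1]
    have : F.diff 0 (Pi.single b 1) ∈ LinearMap.ker ε := by
      rw [hF.exact_zero]; exact ⟨Pi.single b 1, rfl⟩
    exact this
  have next0 : {g1 : (Fin (F.rank 1) → Cox r n k) →ₗ[Cox r n k] (Fin (F'.rank 1) → Cox r n k) //
      GradedMap (F.twist 1) (F'.twist 1) g1 ∧ F'.diff 0 ∘ₗ g1 = g0 ∘ₗ F.diff 0} :=
    ⟨(lift 0 g0 hg0grad hrng0).choose, (lift 0 g0 hg0grad hrng0).choose_spec.1,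
      (lift 0 g0 hg0grad hrng0).choose_spec.2⟩
  -- range condition at higher stages
  have hrng : ∀ (i : ℕ) (p : ChainT F F' i) (b : Fin (F.rank (i+2))),
      p.1.2 (F.diff (i+1) (Pi.single b 1)) ∈ LinearMap.range (F'.diff (i+1)) := by
    intro i p b
    rw [← hF'.exact i, LinearMap.mem_ker]
    have h1 : F'.diff i (p.1.2 (F.diff (i+1) (Pi.single b 1)))
        = p.1.1 (F.diff i (F.diff (i+1) (Pi.single b 1))) := by
      have := congrArg (fun m => m (F.diff (i+1) (Pi.single b 1))) p.2.2.2
      simpa using this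
    rw [h1]
    have h2 : F.diff i (F.diff (i+1) (Pi.single b 1)) = 0 := by
      have := congrArg (fun m => m (Pi.single b 1)) (F.comp_zero i)
      simpa using this
    rw [h2, map_zero]
  have next : ∀ (i : ℕ) (p : ChainT F F' i),
      {g'' : (Fin (F.rank (i+2)) → Cox r n k) →ₗ[Cox r n k] (Fin (F'.rank (i+2)) → Cox r n k) //
        GradedMap (F.twist (i+2)) (F'.twist (i+2)) g'' ∧
        F'.diff (i+1) ∘ₗ g'' = p.1.2 ∘ₗ F.diff (i+1)} := fun i p =>
    ⟨(lift (i+1) p.1.2 p.2.2.1 (hrng i p)).choose,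
      (lift (i+1) p.1.2 p.2.2.1 (hrng i p)).choose_spec.1,
      (lift (i+1) p.1.2 p.2.2.1 (hrng i p)).choose_spec.2⟩
  exact
    let base : ChainT F F' 0 := ⟨(g0, next0.1), hg0grad, next0.2.1, next0.2.2⟩
    let step : ∀ i, ChainT F F' i → ChainT F F' (i+1) := fun i p =>
      ⟨(p.1.2, (next i p).1), p.2.2.1, (next i p).2.1, (next i p).2.2⟩
    let seq : ∀ i, ChainT F F' i := fun i => Nat.rec base step i
    ⟨fun i => (seq i).1.1, fun i => (seq i).2.1, hg0aug, fun i => (seq i).2.2.2⟩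

end E

section F
variable {r : ℕ} {n : Fin r → ℕ} {k : Type} [Field k]
variable {N : Type} [AddCommGroup N] [Module (Cox r n k) N]

/-- Generic construction of a linear map out of a free module. -/
noncomputable def mkMap' {m : ℕ} {M : Type} [AddCommGroup M] [Module (Cox r n k) M]
    (y : Fin m → M) : (Fin m → Cox r n k) →ₗ[Cox r n k] M :=
  (Pi.basisFun (Cox r n k) (Fin m)).constr (Cox r n k) y

@[simp] lemma mkMap'_single {m : ℕ} {M : Type} [AddCommGroup M] [Module (Cox r n k) M]
    (y : Fin m → M) (b : Fin m) :
    mkMap' y ((Pi.single b 1 : Fin m → Cox r n k)) = y b := by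
  rw [mkMap', ← Pi.basisFun_apply]
  exact Module.Basis.constr_basis _ _ _ _

lemma exists_lift_free {m : ℕ} {M₂ M₃ : Type} [AddCommGroup M₂] [Module (Cox r n k) M₂]
    [AddCommGroup M₃] [Module (Cox r n k) M₃]
    (ψ : M₂ →ₗ[Cox r n k] M₃) (φ : (Fin m → Cox r n k) →ₗ[Cox r n k] M₃)
    (h : ∀ b, φ (Pi.single b 1) ∈ LinearMap.range ψ) :
    ∃ l : (Fin m → Cox r n k) →ₗ[Cox r n k] M₂, ψ ∘ₗ l = φ := by
  choose z hz using h
  refine ⟨mkMap' z, linearMap_ext_single fun b => ?_⟩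
  simp only [LinearMap.comp_apply, mkMap'_single]
  exact hz b

variable (F : FreeComplex r n k)

/-- Data for one stage of the homotopy construction. -/
def HomT (θ : ∀ i, (Fin (F.rank i) → Cox r n k) →ₗ[Cox r n k] (Fin (F.rank i) → Cox r n k))
    (i : ℕ) : Type :=
  {p : ((Fin (F.rank i) → Cox r n k) →ₗ[Cox r n k] (Fin (F.rank (i+1)) → Cox r n k)) ×
       ((Fin (F.rank (i+1)) → Cox r n k) →ₗ[Cox r n k] (Fin (F.rank (i+2)) → Cox r n k)) //
    F.diff (i+1) ∘ₗ p.2 = θ (i+1) - p.1 ∘ₗ F.diff i}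

variable {F} {piece : (Fin r → ℤ) → Set N}

/-- Entries of a chain self-map lifting the identity differ from the identity matrix
by entries in the maximal homogeneous ideal. -/
lemma entries_sub_id_mem_maxIdeal
    {ε : (Fin (F.rank 0) → Cox r n k) →ₗ[Cox r n k] N}
    (hF : IsFreeResolution r n k F piece ε) (hmin : F.IsMinimal r n k)
    (γ : ∀ i, (Fin (F.rank i) → Cox r n k) →ₗ[Cox r n k] (Fin (F.rank i) → Cox r n k))
    (hcomm : ∀ i, F.diff i ∘ₗ γ (i+1) = γ i ∘ₗ F.diff i)
    (haug : ε ∘ₗ γ 0 = ε) :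
    ∀ i b j, γ i (Pi.single b 1) j - (Pi.single b 1 : Fin (F.rank i) → Cox r n k) j ∈ maxIdeal r n k := by
  classical
  set θ : ∀ i, (Fin (F.rank i) → Cox r n k) →ₗ[Cox r n k] (Fin (F.rank i) → Cox r n k) :=
    fun i => γ i - LinearMap.id with hθ
  have hθcomm : ∀ i (x : Fin (F.rank (i+1)) → Cox r n k),
      F.diff i (θ (i+1) x) = θ i (F.diff i x) := by
    intro i x
    have := congrArg (fun m => m x) (hcomm i)
    simp only [LinearMap.comp_apply] at this
    simp only [hθ, LinearMap.sub_apply, LinearMap.id_apply, map_sub, this]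
  have hθaug : ∀ x, ε (θ 0 x) = 0 := by
    intro x
    have := congrArg (fun m => m x) haug
    simp only [LinearMap.comp_apply] at this
    simp [hθ, LinearMap.sub_apply, this]
  -- base lift
  have hl0 : ∃ l0, F.diff 0 ∘ₗ l0 = θ 0 := by
    apply exists_lift_free
    intro b
    rw [← hF.exact_zero, LinearMap.mem_ker]
    exact hθaug _
  obtain ⟨l0, hl0⟩ := hl0
  have hl1 : ∃ l1, F.diff 1 ∘ₗ l1 = θ 1 - l0 ∘ₗ F.diff 0 := by
    apply exists_lift_free
    intro b
    rw [← hF.exact 0, LinearMap.mem_ker]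
    have h1 : F.diff 0 ((θ 1 - l0 ∘ₗ F.diff 0) (Pi.single b 1))
        = θ 0 (F.diff 0 (Pi.single b 1)) - (F.diff 0 ∘ₗ l0) (F.diff 0 (Pi.single b 1)) := by
      simp only [LinearMap.sub_apply, LinearMap.comp_apply, map_sub]
      rw [hθcomm 0]
    rw [h1, hl0, sub_self]
  have next0 : {l1 : (Fin (F.rank 1) → Cox r n k) →ₗ[Cox r n k] (Fin (F.rank 2) → Cox r n k) //
      F.diff 1 ∘ₗ l1 = θ 1 - l0 ∘ₗ F.diff 0} := ⟨hl1.choose, hl1.choose_spec⟩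
  have nextEx : ∀ (i : ℕ) (p : HomT F θ i),
      ∃ l'', F.diff (i+2) ∘ₗ l'' = θ (i+2) - p.1.2 ∘ₗ F.diff (i+1) := by
    intro i p
    apply exists_lift_free
    intro b
    rw [← hF.exact (i+1), LinearMap.mem_ker]
    have h1 : F.diff (i+1) ((θ (i+2) - p.1.2 ∘ₗ F.diff (i+1)) (Pi.single b 1))
        = θ (i+1) (F.diff (i+1) (Pi.single b 1))
          - (F.diff (i+1) ∘ₗ p.1.2) (F.diff (i+1) (Pi.single b 1)) := by
      simp only [LinearMap.sub_apply, LinearMap.comp_apply, map_sub]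
      rw [hθcomm (i+1)]
    rw [h1, p.2]
    have h2 : F.diff i (F.diff (i+1) (Pi.single b 1)) = 0 := by
      have := congrArg (fun m => m (Pi.single b 1)) (F.comp_zero i)
      simpa using this
    simp only [LinearMap.sub_apply, LinearMap.comp_apply, h2, map_zero, sub_zero, sub_self]
  have next : ∀ (i : ℕ) (p : HomT F θ i),
      {l'' : (Fin (F.rank (i+2)) → Cox r n k) →ₗ[Cox r n k] (Fin (F.rank (i+3)) → Cox r n k) //
        F.diff (i+2) ∘ₗ l'' = θ (i+2) - p.1.2 ∘ₗ F.diff (i+1)} := fun i p =>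
    ⟨(nextEx i p).choose, (nextEx i p).choose_spec⟩
  -- the homotopy
  have seqfacts : ∃ h : ∀ i, (Fin (F.rank i) → Cox r n k) →ₗ[Cox r n k]
        (Fin (F.rank (i+1)) → Cox r n k),
      F.diff 0 ∘ₗ h 0 = θ 0 ∧ ∀ i, F.diff (i+1) ∘ₗ h (i+1) = θ (i+1) - h i ∘ₗ F.diff i :=
    let base : HomT F θ 0 := ⟨(l0, next0.1), next0.2⟩
    let step : ∀ i, HomT F θ i → HomT F θ (i+1) := fun i p =>
      ⟨(p.1.2, (next i p).1), (next i p).2⟩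
    let seq : ∀ i, HomT F θ i := fun i => Nat.rec base step i
    ⟨fun i => (seq i).1.1, hl0, fun i => (seq i).2⟩
  obtain ⟨h, hh0, hhs⟩ := seqfacts
  -- entries
  have key : ∀ i b j, θ i (Pi.single b 1) j ∈ maxIdeal r n k := by
    intro i b j
    cases i with
    | zero =>
      have : θ 0 (Pi.single b 1) = F.diff 0 (h 0 (Pi.single b 1)) := by
        rw [← hh0]; rfl
      rw [this, map_apply_eq_sum]
      exact Ideal.sum_mem _ fun c _ => Ideal.mul_mem_left _ _ (hmin 0 c j)
    | succ i =>
      have : θ (i+1) (Pi.single b 1)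
          = F.diff (i+1) (h (i+1) (Pi.single b 1)) + h i (F.diff i (Pi.single b 1)) := by
        have := congrArg (fun m => m (Pi.single b 1)) (hhs i)
        simp only [LinearMap.comp_apply, LinearMap.sub_apply] at this
        rw [this]; abel
      rw [this]
      have h1 : F.diff (i+1) (h (i+1) (Pi.single b 1)) j ∈ maxIdeal r n k := by
        rw [map_apply_eq_sum]
        exact Ideal.sum_mem _ fun c _ => Ideal.mul_mem_left _ _ (hmin (i+1) c j)
      have h2 : h i (F.diff i (Pi.single b 1)) j ∈ maxIdeal r n k := by
        rw [map_apply_eq_sum]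
        exact Ideal.sum_mem _ fun c _ => Ideal.mul_mem_right _ _ (hmin i b c)
      exact Ideal.add_mem _ h1 h2
  intro i b j
  have heq : γ i (Pi.single b 1) j - (Pi.single b 1 : Fin (F.rank i) → Cox r n k) j = θ i (Pi.single b 1) j := by
    simp [hθ, LinearMap.sub_apply]
  rw [heq]
  exact key i b j

end F

section G
variable {r : ℕ} {n : Fin r → ℕ} {k : Type} [Field k]

/-- membership in `Gsub` unfolded. -/
lemma mem_Gsub {F : FreeComplex r n k} {d : Fin r → ℤ} {i : ℕ}
    {x : Fin (F.rank i) → Cox r n k} :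
    x ∈ Gsub r n k F d i ↔
      ∀ b, ¬ (F.twist i b ≤ d + fun t => (n t : ℤ)) → x b = 0 := Iff.rfl

/-- A graded map sends vectors supported on small twists to vectors supported
on small twists. -/
lemma gradedMap_supported {m m' : ℕ} {t : Fin m → (Fin r → ℤ)} {t' : Fin m' → (Fin r → ℤ)}
    {g : (Fin m → Cox r n k) →ₗ[Cox r n k] (Fin m' → Cox r n k)}
    (hg : GradedMap t t' g) {d : Fin r → ℤ} {x : Fin m → Cox r n k}
    (hx : ∀ b, ¬ (t b ≤ d + fun s => (n s : ℤ)) → x b = 0) :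
    ∀ j, ¬ (t' j ≤ d + fun s => (n s : ℤ)) → g x j = 0 := by
  intro j hj
  rw [map_apply_eq_sum]
  apply Finset.sum_eq_zero
  intro b _
  by_cases hb : t b ≤ d + fun s => (n s : ℤ)
  · rcases eq_or_ne (g (Pi.single b 1) j) 0 with h | h
    · rw [h, mul_zero]
    · exact absurd (le_trans (sub_nonneg.mp (Sdeg_nonneg (hg.entry b j) h)) hb) hj
  · rw [hx b hb, zero_mul]

/-- Strictness: a graded endomorphism with entries in the maximal ideal has strictly
twist-decreasing entries. -/
lemma strict_entries {m : ℕ} {t : Fin m → (Fin r → ℤ)}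
    {A : (Fin m → Cox r n k) →ₗ[Cox r n k] (Fin m → Cox r n k)}
    (hA : GradedMap t t A)
    (hI : ∀ b j, A (Pi.single b 1) j ∈ maxIdeal r n k) :
    ∀ b j, ¬ (t j < t b) → A (Pi.single b 1) j = 0 := by
  intro b j hlt
  by_contra h0
  have h1 : t j ≤ t b := sub_nonneg.mp (Sdeg_nonneg (hA.entry b j) h0)
  have h2 : t j = t b := by
    rcases lt_or_eq_of_le h1 with h | h
    · exact absurd h hlt
    · exact h
  have h3 : A (Pi.single b 1) j ∈ Sdeg r n k 0 := by
    have := hA.entry b j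
    rwa [← h2, sub_self] at this
  exact h0 (eq_zero_of_Sdeg_zero_mem_maxIdeal h3 (hI b j))

/-- Nilpotency of a strictly twist-decreasing endomorphism. -/
lemma strict_pow_eq_zero {m : ℕ} {t : Fin m → (Fin r → ℤ)}
    {A : Module.End (Cox r n k) (Fin m → Cox r n k)}
    (hs : ∀ b j, ¬ (t j < t b) → A (Pi.single b 1) j = 0) :
    A ^ m = 0 := by
  classical
  set f : Fin m → ℕ := fun j => (Finset.univ.filter fun b => t b < t j).card with hf
  have hmono : ∀ {j j' : Fin m}, t j < t j' → f j < f j' := by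
    intro j j' h
    apply Finset.card_lt_card
    constructor
    · intro b hb
      rw [Finset.mem_filter] at hb ⊢
      exact ⟨hb.1, lt_trans hb.2 h⟩
    · intro hsub
      have : j ∈ Finset.univ.filter fun b => t b < t j' :=
        Finset.mem_filter.2 ⟨Finset.mem_univ j, h⟩
      have := hsub this
      rw [Finset.mem_filter] at this
      exact lt_irrefl _ this.2
  have hbound : ∀ j : Fin m, f j < m := by
    intro j
    have : (Finset.univ.filter fun b => t b < t j) ⊂ Finset.univ := by
      constructor
      · exact Finset.filter_subset _ _
      · intro hsub
        have := hsub (Finset.mem_univ j)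
        rw [Finset.mem_filter] at this
        exact lt_irrefl _ this.2
    simpa using Finset.card_lt_card this
  have claim : ∀ (s : ℕ) (x : Fin m → Cox r n k) (j : Fin m),
      m ≤ f j + s → (A ^ s) x j = 0 := by
    intro s
    induction s with
    | zero =>
      intro x j hle
      exact absurd hle (by simpa using hbound j)
    | succ s ih =>
      intro x j hle
      have hsucc : (A ^ (s+1)) x = A ((A ^ s) x) := by
        rw [pow_succ']
        rfl
      rw [hsucc, map_apply_eq_sum]
      apply Finset.sum_eq_zero
      intro b _
      by_cases hb : t j < t b
      · have hfb := hmono hb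
        have hz : (A ^ s) x b = 0 := ih x b (by omega)
        rw [hz, zero_mul]
      · rw [hs b j hb, mul_zero]
  apply LinearMap.ext
  intro x
  funext j
  exact claim m x j (Nat.le_add_left m (f j))

end G

section H
variable {r : ℕ} {n : Fin r → ℕ} {k : Type} [Field k]

lemma GradedMap.zero {m m' : ℕ} (t : Fin m → (Fin r → ℤ)) (t' : Fin m' → (Fin r → ℤ)) :
    GradedMap t t' (0 : (Fin m → Cox r n k) →ₗ[Cox r n k] (Fin m' → Cox r n k)) :=
  fun w _ _ j => by simpa using zero_mem_Sdeg (w - t' j)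

lemma GradedMap.neg {m m' : ℕ} {t : Fin m → (Fin r → ℤ)} {t' : Fin m' → (Fin r → ℤ)}
    {g : (Fin m → Cox r n k) →ₗ[Cox r n k] (Fin m' → Cox r n k)}
    (hg : GradedMap t t' g) : GradedMap t t' (-g) := by
  have := (GradedMap.zero t t').sub hg
  simpa using this

lemma GradedMap.add {m m' : ℕ} {t : Fin m → (Fin r → ℤ)} {t' : Fin m' → (Fin r → ℤ)}
    {g h : (Fin m → Cox r n k) →ₗ[Cox r n k] (Fin m' → Cox r n k)}
    (hg : GradedMap t t' g) (hh : GradedMap t t' h) : GradedMap t t' (g + h) := by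
  have := hg.sub hh.neg
  simpa using this

lemma GradedMap.pow {m : ℕ} {t : Fin m → (Fin r → ℤ)}
    {A : Module.End (Cox r n k) (Fin m → Cox r n k)}
    (hA : GradedMap t t A) (s : ℕ) : GradedMap t t (A ^ s) := by
  induction s with
  | zero => simpa [pow_zero, Module.End.one_eq_id] using GradedMap.id t
  | succ s ih =>
    have : A ^ (s+1) = A ∘ₗ A ^ s := by rw [pow_succ']; rfl
    rw [this]
    exact hA.comp ih

lemma GradedMap.sum {m : ℕ} {t : Fin m → (Fin r → ℤ)} {ι : Type*} (s : Finset ι)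
    (f : ι → Module.End (Cox r n k) (Fin m → Cox r n k))
    (hf : ∀ i ∈ s, GradedMap t t (f i)) : GradedMap t t (∑ i ∈ s, f i) := by
  classical
  induction s using Finset.induction_on with
  | empty => simpa using GradedMap.zero t t
  | @insert a s' hnot ih =>
    rw [Finset.sum_insert hnot]
    exact (hf a (Finset.mem_insert_self a s')).add
      (ih fun i hi => hf i (Finset.mem_insert_of_mem hi))

/-- A graded endomorphism congruent to the identity modulo the maximal ideal has a
two-sided inverse which is also graded. -/
lemma exists_graded_inverse {m : ℕ} {t : Fin m → (Fin r → ℤ)}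
    {γ : Module.End (Cox r n k) (Fin m → Cox r n k)}
    (hγ : GradedMap t t γ)
    (hent : ∀ b j, γ (Pi.single b 1) j - (Pi.single b 1 : Fin m → Cox r n k) j
      ∈ maxIdeal r n k) :
    ∃ δ : Module.End (Cox r n k) (Fin m → Cox r n k),
      GradedMap t t δ ∧ (∀ x, δ (γ x) = x) ∧ (∀ x, γ (δ x) = x) := by
  set A : Module.End (Cox r n k) (Fin m → Cox r n k) := γ - 1 with hA
  have hAg : GradedMap t t A := by
    have : A = γ - LinearMap.id := by rw [hA, Module.End.one_eq_id]
    rw [this]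
    exact hγ.sub (GradedMap.id t)
  have hAent : ∀ b j, A (Pi.single b 1) j ∈ maxIdeal r n k := by
    intro b j
    have : A (Pi.single b 1) j
        = γ (Pi.single b 1) j - (Pi.single b 1 : Fin m → Cox r n k) j := by
      simp [hA, LinearMap.sub_apply]
    rw [this]
    exact hent b j
  have hApow : A ^ m = 0 := strict_pow_eq_zero (strict_entries hAg hAent)
  set B : Module.End (Cox r n k) (Fin m → Cox r n k) :=
    ∑ s ∈ Finset.range m, (-A) ^ s with hB
  have hnegpow : (-A) ^ m = 0 := by
    have h := neg_pow A m
    rw [h, hApow, mul_zero]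
  have hγeq : (1 : Module.End (Cox r n k) (Fin m → Cox r n k)) - (-A) = γ := by
    rw [hA]; abel
  have h1 : γ * B = 1 := by
    have hg := mul_neg_geom_sum (-A) m
    rw [hnegpow, hγeq, sub_zero] at hg
    exact hg
  have h2 : B * γ = 1 := by
    have hg := geom_sum_mul_neg (-A) m
    rw [hnegpow, hγeq, sub_zero] at hg
    exact hg
  refine ⟨B, ?_, ?_, ?_⟩
  · exact GradedMap.sum _ _ fun s _ => (hAg.neg).pow s
  · intro x
    have := congrArg (fun m => m x) h2
    simpa [Module.End.mul_apply] using this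
  · intro x
    have := congrArg (fun m => m x) h1
    simpa [Module.End.mul_apply] using this

end H
end VR

open VR
/-- Let `M` be a finitely generated `ℤʳ`-graded module over the Cox
ring with minimal free resolution `F`, let `d ∈ ℤʳ`, let `G_i ⊆ F_i` be the span of
the free summands with generator degree `≤ d + n`, and let `φᵢ` be the restriction of
the differential of `F`.  Then (i) `φᵢ(Gᵢ) ⊆ G_{i-1}` (and `φᵢ ∘ φᵢ₊₁ = 0`), so `G` is
a free complex; and (ii) up to isomorphism of (graded) complexes, `G` depends only on
`M` and `d`, not on the chosen minimal free resolution. -/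
theorem statement_9 (r : ℕ) (n : Fin r → ℕ) (k : Type) [Field k]
    (N : Type) [AddCommGroup N] [Module (VR.Cox r n k) N]
    (piece : (Fin r → ℤ) → Set N)
    (hgr : VR.IsGrading r n k piece)
    (hfg : Module.Finite (VR.Cox r n k) N)
    (d : Fin r → ℤ) :
    -- (i): the differentials restrict to the subcomplex
    (∀ (F : VR.FreeComplex r n k)
        (ε : (Fin (F.rank 0) → VR.Cox r n k) →ₗ[VR.Cox r n k] N),
        VR.IsFreeResolution r n k F piece ε → VR.FreeComplex.IsMinimal r n k F →
        ∀ (i : ℕ) (x : Fin (F.rank (i + 1)) → VR.Cox r n k),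
          x ∈ VR.Gsub r n k F d (i + 1) → F.diff i x ∈ VR.Gsub r n k F d i) ∧
    -- (ii): `G` is independent of the chosen minimal free resolution
    (∀ (F F' : VR.FreeComplex r n k)
        (ε : (Fin (F.rank 0) → VR.Cox r n k) →ₗ[VR.Cox r n k] N)
        (ε' : (Fin (F'.rank 0) → VR.Cox r n k) →ₗ[VR.Cox r n k] N),
        VR.IsFreeResolution r n k F piece ε → VR.FreeComplex.IsMinimal r n k F →
        VR.IsFreeResolution r n k F' piece ε' → VR.FreeComplex.IsMinimal r n k F' →
        ∃ e : ∀ i : ℕ, VR.Gsub r n k F d i ≃ₗ[VR.Cox r n k] VR.Gsub r n k F' d i,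
          (∀ (i : ℕ) (x : VR.Gsub r n k F d (i + 1))
              (hx' : F.diff i x.1 ∈ VR.Gsub r n k F d i),
              ((e i) ⟨F.diff i x.1, hx'⟩ : Fin (F'.rank i) → VR.Cox r n k)
                = F'.diff i ((e (i + 1)) x).1) ∧
          (∀ (i : ℕ) (dd : Fin r → ℤ) (x : VR.Gsub r n k F d i),
              (x : Fin (F.rank i) → VR.Cox r n k) ∈ VR.fpiece r n k (F.twist i) dd →
              ((e i x : Fin (F'.rank i) → VR.Cox r n k) ∈ VR.fpiece r n k (F'.twist i) dd))) := by
  constructor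
  · -- part (i)
    intro F ε hF hmin i x hx
    exact mem_Gsub.2 (gradedMap_supported (fun w y hy => F.graded i w y hy) (mem_Gsub.1 hx))
  · -- part (ii)
    intro F F' ε ε' hF hminF hF' hminF'
    obtain ⟨α, hαg, hαaug, hαcomm⟩ :=
      exists_chain_map (F := F) (F' := F') ε ε' hgr hF hF'
    obtain ⟨β, hβg, hβaug, hβcomm⟩ :=
      exists_chain_map (F := F') (F' := F) ε' ε hgr hF' hF
    -- the self chain map of F
    have hγg : ∀ i, GradedMap (F.twist i) (F.twist i) (β i ∘ₗ α i) :=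
      fun i => (hβg i).comp (hαg i)
    have hγcomm : ∀ i, F.diff i ∘ₗ (β (i+1) ∘ₗ α (i+1)) = (β i ∘ₗ α i) ∘ₗ F.diff i := by
      intro i
      calc F.diff i ∘ₗ (β (i+1) ∘ₗ α (i+1))
          = (F.diff i ∘ₗ β (i+1)) ∘ₗ α (i+1) := by rw [LinearMap.comp_assoc]
        _ = (β i ∘ₗ F'.diff i) ∘ₗ α (i+1) := by rw [hβcomm i]
        _ = β i ∘ₗ (F'.diff i ∘ₗ α (i+1)) := by rw [LinearMap.comp_assoc]
        _ = β i ∘ₗ (α i ∘ₗ F.diff i) := by rw [hαcomm i]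
        _ = (β i ∘ₗ α i) ∘ₗ F.diff i := by rw [LinearMap.comp_assoc]
    have hγaug : ε ∘ₗ (β 0 ∘ₗ α 0) = ε := by
      calc ε ∘ₗ (β 0 ∘ₗ α 0) = (ε ∘ₗ β 0) ∘ₗ α 0 := by rw [LinearMap.comp_assoc]
        _ = ε' ∘ₗ α 0 := by rw [hβaug]
        _ = ε := hαaug
    have hent := entries_sub_id_mem_maxIdeal hF hminF (fun i => β i ∘ₗ α i) hγcomm hγaug
    have hδ : ∀ i, ∃ δ : Module.End (Cox r n k) (Fin (F.rank i) → Cox r n k),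
        GradedMap (F.twist i) (F.twist i) δ ∧
        (∀ x, δ ((β i ∘ₗ α i) x) = x) ∧ (∀ x, (β i ∘ₗ α i) (δ x) = x) :=
      fun i => exists_graded_inverse (hγg i) (hent i)
    choose δ hδg hδl hδr using hδ
    -- the self chain map of F'
    have hγ'g : ∀ i, GradedMap (F'.twist i) (F'.twist i) (α i ∘ₗ β i) :=
      fun i => (hαg i).comp (hβg i)
    have hγ'comm : ∀ i, F'.diff i ∘ₗ (α (i+1) ∘ₗ β (i+1)) = (α i ∘ₗ β i) ∘ₗ F'.diff i := by
      intro i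
      calc F'.diff i ∘ₗ (α (i+1) ∘ₗ β (i+1))
          = (F'.diff i ∘ₗ α (i+1)) ∘ₗ β (i+1) := by rw [LinearMap.comp_assoc]
        _ = (α i ∘ₗ F.diff i) ∘ₗ β (i+1) := by rw [hαcomm i]
        _ = α i ∘ₗ (F.diff i ∘ₗ β (i+1)) := by rw [LinearMap.comp_assoc]
        _ = α i ∘ₗ (β i ∘ₗ F'.diff i) := by rw [hβcomm i]
        _ = (α i ∘ₗ β i) ∘ₗ F'.diff i := by rw [LinearMap.comp_assoc]
    have hγ'aug : ε' ∘ₗ (α 0 ∘ₗ β 0) = ε' := by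
      calc ε' ∘ₗ (α 0 ∘ₗ β 0) = (ε' ∘ₗ α 0) ∘ₗ β 0 := by rw [LinearMap.comp_assoc]
        _ = ε ∘ₗ β 0 := by rw [hαaug]
        _ = ε' := hβaug
    have hent' := entries_sub_id_mem_maxIdeal hF' hminF' (fun i => α i ∘ₗ β i) hγ'comm hγ'aug
    have hδ' : ∀ i, ∃ δ' : Module.End (Cox r n k) (Fin (F'.rank i) → Cox r n k),
        GradedMap (F'.twist i) (F'.twist i) δ' ∧
        (∀ x, δ' ((α i ∘ₗ β i) x) = x) ∧ (∀ x, (α i ∘ₗ β i) (δ' x) = x) :=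
      fun i => exists_graded_inverse (hγ'g i) (hent' i)
    choose δ' hδ'g hδ'l hδ'r using hδ'
    -- the restricted equivalences
    have hpres : ∀ i, ∀ x ∈ Gsub r n k F d i, α i x ∈ Gsub r n k F' d i :=
      fun i x hx => mem_Gsub.2 (gradedMap_supported (hαg i) (mem_Gsub.1 hx))
    have hpresβ : ∀ i, ∀ x ∈ Gsub r n k F' d i, β i x ∈ Gsub r n k F d i :=
      fun i x hx => mem_Gsub.2 (gradedMap_supported (hβg i) (mem_Gsub.1 hx))
    have hbij : ∀ i, Function.Bijective ((α i).restrict (hpres i)) := by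
      intro i
      constructor
      · intro x y hxy
        apply Subtype.ext
        have h1 : α i x.1 = α i y.1 := by
          have := congrArg Subtype.val hxy
          rwa [LinearMap.restrict_coe_apply, LinearMap.restrict_coe_apply] at this
        calc (x : Fin (F.rank i) → Cox r n k) = δ i ((β i ∘ₗ α i) x.1) := (hδl i x.1).symm
          _ = δ i (β i (α i x.1)) := rfl
          _ = δ i (β i (α i y.1)) := by rw [h1]
          _ = δ i ((β i ∘ₗ α i) y.1) := rfl
          _ = y.1 := hδl i y.1
      · intro y
        have hz : δ' i y.1 ∈ Gsub r n k F' d i :=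
          mem_Gsub.2 (gradedMap_supported (hδ'g i) (mem_Gsub.1 y.2))
        refine ⟨⟨β i (δ' i y.1), hpresβ i _ hz⟩, ?_⟩
        apply Subtype.ext
        rw [LinearMap.restrict_coe_apply]
        calc α i (β i (δ' i y.1)) = (α i ∘ₗ β i) (δ' i y.1) := rfl
          _ = y.1 := hδ'r i y.1
    refine ⟨fun i => LinearEquiv.ofBijective ((α i).restrict (hpres i)) (hbij i), ?_, ?_⟩
    · intro i x hx'
      have hL : ((LinearEquiv.ofBijective ((α i).restrict (hpres i)) (hbij i))
            ⟨F.diff i x.1, hx'⟩ : Fin (F'.rank i) → Cox r n k)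
          = α i (F.diff i x.1) := by
        rw [LinearEquiv.ofBijective_apply, LinearMap.restrict_coe_apply]
      have hR : ((LinearEquiv.ofBijective ((α (i+1)).restrict (hpres (i+1))) (hbij (i+1)))
            x : Fin (F'.rank (i+1)) → Cox r n k) = α (i+1) x.1 := by
        rw [LinearEquiv.ofBijective_apply, LinearMap.restrict_coe_apply]
      rw [hL, hR]
      have := congrArg (fun m => m x.1) (hαcomm i)
      simpa using this.symm
    · intro i dd x hx
      have hL : ((LinearEquiv.ofBijective ((α i).restrict (hpres i)) (hbij i))
            x : Fin (F'.rank i) → Cox r n k) = α i x.1 := by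
        rw [LinearEquiv.ofBijective_apply, LinearMap.restrict_coe_apply]
      rw [hL]
      exact hαg i dd x.1 hx
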